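/- Let P be a connected shrub with at least two vertices. Then for any two distinct vertices a, a' of height 0, there exists a vertex b covering both a and a'. -/

import Mathlib

/-- A shrub on a finite vertex type `V`: a graph together with a height function
satisfying the shrub axioms (edges between consecutive heights, every positive-height
vertex covers a vertex one lower, and the two forbidden induced patterns). -/
structure Shrub (V : Type*) [Fintype V] [DecidableEq V] where
  adj : V → V → Prop
  symm : ∀ a b, adj a b → adj b a
  loopless : ∀ a, ¬ adj a a
  height : V → ℕ
  edge_height : ∀ a b, adj a b → height a = height b + 1 ∨ height b = height a + 1
  covers_below : ∀ a, 0 < height a → ∃ b, adj a b ∧ height b + 1 = height a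
  patternA : ∀ a b c d e, a ≠ b → c ≠ d → c ≠ e → d ≠ e →
    height a = height c + 1 → height b = height c + 1 →
    height d = height c → height e = height c →
    adj a c → adj a d → adj b d → adj b e → ¬ adj a e → ¬ adj b c → False
  patternB : ∀ a b c d, b ≠ c →
    height a = height d + 2 → height b = height d + 1 → height c = height d + 1 →
    adj a b → adj a c → adj b d → ¬ adj c d → False

variable {V : Type*} [Fintype V] [DecidableEq V]

/-- `P.Covers j i` means the vertex `j` covers `i` : they are joined by an edge and
`j` is one level higher than `i` (edges are oriented downward). -/
def Shrub.Covers (P : Shrub V) (j i : V) : Prop :=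
  P.adj i j ∧ P.height i + 1 = P.height j

/-- The underlying simple graph of a shrub. -/
def Shrub.graph (P : Shrub V) : SimpleGraph V where
  Adj := P.adj
  symm := ⟨by intro a b h; exact P.symm a b h⟩
  loopless := ⟨by intro a h; exact P.loopless a h⟩

/-- `Desc v x`: `x` is a height-0 descendant of `v` via a chain of covers. -/
inductive Shrub.Desc (P : Shrub V) : V → V → Prop
  | refl (x : V) (h : P.height x = 0) : Shrub.Desc P x x
  | step {v u x : V} (h : P.Covers v u) (hd : Shrub.Desc P u x) : Shrub.Desc P v x

lemma Shrub.desc_height0 {P : Shrub V} {v x : V} (h : P.Desc v x) : P.height x = 0 := by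
  induction h with
  | refl x h => exact h
  | step h hd ih => exact ih

lemma Shrub.desc_of_height0 {P : Shrub V} {v x : V} (hv : P.height v = 0)
    (h : P.Desc v x) : x = v := by
  cases h with
  | refl => rfl
  | step hc hd => have := hc.2; omega

lemma Shrub.desc_nonempty (P : Shrub V) (v : V) : ∃ x, P.Desc v x := by
  have key : ∀ n v, P.height v = n → ∃ x, P.Desc v x := by
    intro n
    induction n using Nat.strong_induction_on with
    | _ n ih =>
      intro v hv
      rcases Nat.eq_zero_or_pos n with h0 | hpos
      · exact ⟨v, .refl v (by omega)⟩
      · obtain ⟨u, hadj, hu⟩ := P.covers_below v (by omega)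
        obtain ⟨x, hx⟩ := ih (P.height u) (by omega) u rfl
        exact ⟨x, .step ⟨P.symm _ _ hadj, hu⟩ hx⟩
  exact key (P.height v) v rfl

/-- Two height-0 vertices are related if equal or have a common cover. -/
def Shrub.Rel (P : Shrub V) (x y : V) : Prop :=
  x = y ∨ ∃ b, P.Covers b x ∧ P.Covers b y

lemma Shrub.rel_trans {P : Shrub V} {x y z : V}
    (hx : P.height x = 0) (hy : P.height y = 0) (hz : P.height z = 0)
    (h1 : P.Rel x y) (h2 : P.Rel y z) : P.Rel x z := by
  rcases h1 with rfl | ⟨b, hbx, hby⟩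
  · exact h2
  rcases h2 with rfl | ⟨c, hcy, hcz⟩
  · exact .inr ⟨b, hbx, hby⟩
  by_cases hxz : x = z
  · exact .inl hxz
  by_cases hxy : x = y
  · subst hxy; exact .inr ⟨c, hcy, hcz⟩
  by_cases hyz : y = z
  · subst hyz; exact .inr ⟨b, hbx, hby⟩
  by_cases hbc : b = c
  · subst hbc; exact .inr ⟨b, hbx, hcz⟩
  by_cases hbz : P.adj b z
  · exact .inr ⟨b, hbx, P.symm _ _ hbz, by have := hbx.2; omega⟩
  by_cases hcx : P.adj c x
  · exact .inr ⟨c, ⟨P.symm _ _ hcx, by have := hcy.2; omega⟩, hcz⟩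
  exact absurd (P.patternA b c x y z hbc hxy hxz hyz
    (by have := hbx.2; omega) (by have := hcy.2; omega) (by omega) (by omega)
    (P.symm _ _ hbx.1) (P.symm _ _ hby.1) (P.symm _ _ hcy.1) (P.symm _ _ hcz.1)
    hbz hcx) (fun h => h)

lemma Shrub.desc_rel (P : Shrub V) : ∀ v x y, P.Desc v x → P.Desc v y → P.Rel x y := by
  have key : ∀ n v, P.height v = n → ∀ x y, P.Desc v x → P.Desc v y → P.Rel x y := by
    intro n
    induction n using Nat.strong_induction_on with
    | _ n ih =>
      intro v hv x y hx hy
      rcases Nat.eq_zero_or_pos n with h0 | hpos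
      · have hx' := P.desc_of_height0 (by omega) hx
        have hy' := P.desc_of_height0 (by omega) hy
        exact .inl (hx'.trans hy'.symm)
      cases hx with
      | refl _ h => omega
      | step hcu hdu =>
        rename_i u
        cases hy with
        | refl _ h => omega
        | step hcu' hdu' =>
          rename_i u'
          by_cases huu : u = u'
          · subst huu
            exact ih (P.height u) (by have := hcu.2; omega) u rfl x y hdu hdu'
          rcases Nat.lt_or_ge n 2 with hn1 | hn2
          · -- n = 1 : u, u' have height 0, so x = u, y = u'
            have hu0 : P.height u = 0 := by have := hcu.2; omega
            have hu0' : P.height u' = 0 := by have := hcu'.2; omega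
            have hxu := P.desc_of_height0 hu0 hdu
            have hyu := P.desc_of_height0 hu0' hdu'
            subst hxu; subst hyu
            exact .inr ⟨v, hcu, hcu'⟩
          · -- n ≥ 2 : use pattern B to find a common child d of u and u'
            have hu : P.height u = n - 1 := by have := hcu.2; omega
            obtain ⟨d, hud, hd⟩ := P.covers_below u (by omega)
            have hadj : P.adj u' d := by
              by_contra hcon
              exact P.patternB v u u' d huu
                (by have := hcu'.2; omega) (by omega) (by have := hcu'.2; omega)
                (P.symm _ _ hcu.1) (P.symm _ _ hcu'.1) hud hcon
            have hcd : P.Covers u d := ⟨P.symm _ _ hud, hd⟩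
            have hcd' : P.Covers u' d := ⟨P.symm _ _ hadj, by have := hcu'.2; omega⟩
            obtain ⟨z, hz⟩ := P.desc_nonempty d
            have h1 : P.Rel x z :=
              ih (P.height u) (by omega) u rfl x z hdu (.step hcd hz)
            have h2 : P.Rel z y :=
              ih (P.height u') (by have := hcu'.2; omega) u' rfl z y (.step hcd' hz) hdu'
            exact Shrub.rel_trans (P.desc_height0 hdu) (P.desc_height0 hz)
              (P.desc_height0 hdu') h1 h2
  exact fun v => key (P.height v) v rfl

lemma Shrub.reach_rel (P : Shrub V) {u v : V} (h : P.graph.Reachable u v) :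
    ∀ x y, P.Desc u x → P.Desc v y → P.Rel x y := by
  obtain ⟨w⟩ := h
  induction w with
  | nil => exact P.desc_rel _
  | cons hadj w ih =>
    rename_i u u'' v
    intro x y hx hy
    have hadj' : P.adj u u'' := hadj
    rcases P.edge_height u u'' hadj' with hc | hc
    · -- u covers u''
      have hcov : P.Covers u u'' := ⟨P.symm _ _ hadj', hc.symm⟩
      obtain ⟨z, hz⟩ := P.desc_nonempty u''
      have h1 : P.Rel x z := P.desc_rel u x z hx (.step hcov hz)
      have h2 : P.Rel z y := ih z y hz hy
      exact Shrub.rel_trans (P.desc_height0 hx) (P.desc_height0 hz)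
        (P.desc_height0 hy) h1 h2
    · -- u'' covers u
      have hcov : P.Covers u'' u := ⟨hadj', hc.symm⟩
      exact ih x y (.step hcov hx) hy

/-- in a connected shrub with at least two vertices, any two distinct
height-0 vertices have a common cover. -/
theorem stmt2 (P : Shrub V) (hconn : P.graph.Connected) (hnt : Nontrivial V)
    (a a' : V) (hne : a ≠ a') (ha : P.height a = 0) (ha' : P.height a' = 0) :
    ∃ b, P.Covers b a ∧ P.Covers b a' := by
  have h := P.reach_rel (hconn a a') a a' (.refl a ha) (.refl a' ha')
  rcases h with h | h
  · exact absurd h hne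
  · exact h
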